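/- arXiv:1710.00820 — 2 statements merged into one kernel-verified Lean document; each statement's English description precedes it below -/
import Mathlib

section
/- Let U be a word such that for every pair of variables x, y ∈ con(U) the word U(x,y) has height at most 4. Let u be a word and Θ: 𝔄 → 𝔄⁺ a substitution such that for all x, y ∈ con(u), if Θ(x) and Θ(y) are powers of the same variable then x = y. If Θ(u) = U, then for every pair of variables x, y ∈ con(u), the word u(x,y) has height at most 4. -/
/-- The alphabet of variables. -/
abbrev Var := ℕ

/-- Words are (possibly empty) lists of variables; elements of the free
semigroup `𝔄⁺` are the nonempty ones. -/
abbrev Word := List Var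

/-- Two words are of the same type if they agree after collapsing each
maximal constant run (island) to a single letter. -/
def sameType (u v : Word) : Prop :=
  u.destutter (· ≠ ·) = v.destutter (· ≠ ·)

/-- The number of islands of a word. -/
def height (u : Word) : ℕ := (u.destutter (· ≠ ·)).length

/-- The set of variables occurring in a word. -/
def con (u : Word) : Set Var := {x | x ∈ u}

/-- `del u X` is the word obtained from `u` by deleting all occurrences of all
variables not in the list `X`; i.e. `u(x₁,…,x_k)` for `X = [x₁,…,x_k]`. -/
def del (u : Word) (X : List Var) : Word := u.filter (· ∈ X)

/-- The set of linear variables of `u` (occurring exactly once). -/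
def lin (u : Word) : Set Var := {x | u.count x = 1}

/-- The set of non-linear variables of `u` (occurring at least twice). -/
def nonlin (u : Word) : Set Var := {x | 2 ≤ u.count x}

/-- The set of variables occurring exactly twice in `u`. -/
def con2 (u : Word) : Set Var := {x | u.count x = 2}

/-- The set of variables occurring at least three times in `u`. -/
def conGt2 (u : Word) : Set Var := {x | 3 ≤ u.count x}

/-- Applying a substitution `Θ : 𝔄 → 𝔄⁺` to a word, as the extension of `Θ`
to a homomorphism. -/
def subst (Θ : Var → Word) (u : Word) : Word := u.flatMap Θ

/-- `w` is a power (with positive exponent) of the variable `c`. -/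
def isPowerOf (w : Word) (c : Var) : Prop := ∃ k : ℕ, 0 < k ∧ w = List.replicate k c

/-- A monoid `M` satisfies the identity `u ≈ v` if every monoid homomorphism
from the free monoid `𝔄*` to `M` (equivalently, the extension of every map
`φ : 𝔄 → M`) identifies `u` and `v`. -/
def MSat (M : Type) [Monoid M] (u v : Word) : Prop :=
  ∀ φ : Var → M, (u.map φ).prod = (v.map φ).prod

/-- Evaluation of a nonempty word in a semigroup under `φ : 𝔄 → S`
(the empty word evaluates to `none`). -/
def evalS {S : Type} [Semigroup S] (φ : Var → S) : Word → Option S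
  | [] => none
  | a :: t => some ((t.map φ).foldl (· * ·) (φ a))

/-- A semigroup `S` satisfies the identity `u ≈ v` between nonempty words if
every semigroup homomorphism from the free semigroup `𝔄⁺` to `S` identifies
`u` and `v`. -/
def SSat (S : Type) [Semigroup S] (u v : Word) : Prop :=
  ∀ φ : Var → S, evalS φ u = evalS φ v

/-- Property (C_ℓ) for a monoid: every word in two variables of height at most
`ℓ` can form an identity of `M` only with a word of the same type. -/
def MPropC (M : Type) [Monoid M] (ℓ : ℕ) : Prop :=
  ∀ x y : Var, x ≠ y → ∀ u : Word, u ≠ [] → (∀ c ∈ u, c = x ∨ c = y) →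
    height u ≤ ℓ → ∀ v : Word, MSat M u v → sameType u v

/-- Property (C_ℓ) for a semigroup. -/
def SPropC (S : Type) [Semigroup S] (ℓ : ℕ) : Prop :=
  ∀ x y : Var, x ≠ y → ∀ u : Word, u ≠ [] → (∀ c ∈ u, c = x ∨ c = y) →
    height u ≤ ℓ → ∀ v : Word, SSat S u v → sameType u v

/-- A monoid is finitely based if some finite set of identities it satisfies
entails all its identities (in every monoid). -/
def MonoidFB (M : Type) [Monoid M] : Prop :=
  ∃ Sig : Finset (Word × Word),
    (∀ p ∈ Sig, MSat M p.1 p.2) ∧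
    ∀ (N : Type) [Monoid N], (∀ p ∈ Sig, MSat N p.1 p.2) →
      ∀ u v : Word, MSat M u v → MSat N u v

/-- A semigroup is finitely based if some finite set of identities (between
nonempty words) it satisfies entails all its identities (in every semigroup). -/
def SemigroupFB (S : Type) [Semigroup S] : Prop :=
  ∃ Sig : Finset (Word × Word),
    (∀ p ∈ Sig, p.1 ≠ [] ∧ p.2 ≠ [] ∧ SSat S p.1 p.2) ∧
    ∀ (T : Type) [Semigroup T], (∀ p ∈ Sig, SSat T p.1 p.2) →
      ∀ u v : Word, u ≠ [] → v ≠ [] → SSat S u v → SSat T u v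

/-- `B` is a block of `u` occurring as `u = p ++ B ++ s`: it contains no linear
variables of `u` and is maximal with this property. -/
def IsBlockAt (u p B s : Word) : Prop :=
  u = p ++ B ++ s ∧ (∀ c ∈ B, c ∉ lin u) ∧
  (∀ c : Var, p.getLast? = some c → c ∈ lin u) ∧
  (∀ c : Var, s.head? = some c → c ∈ lin u)

/-- The word `Uₙ = (x₁⋯xₙ)(xₙ⋯x₁)(x₁⋯xₙ)`. -/
def Uword (n : ℕ) (x : Fin n → Var) : Word :=
  List.ofFn x ++ (List.ofFn x).reverse ++ List.ofFn x

/-- The word `Vₙ = (x₁⋯xₙ)(x₁²x₂²⋯xₙ²)`. -/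
def Vword (n : ℕ) (x : Fin n → Var) : Word :=
  List.ofFn x ++ (List.ofFn x).flatMap (fun c => [c, c])

/-- Auxiliary height with pending head. -/
def height' (a : Var) (l : Word) : ℕ := (l.destutter' (· ≠ ·) a).length

lemma height_cons (a : Var) (l : Word) : height (a :: l) = height' a l := rfl

lemma height'_nil (a : Var) : height' a [] = 1 := rfl

lemma height'_cons_eq {a c : Var} (l : Word) (h : a = c) :
    height' a (c :: l) = height' c l := by
  subst h; simp [height', List.destutter'_cons]

lemma height'_cons_ne {a c : Var} (l : Word) (h : a ≠ c) :
    height' a (c :: l) = 1 + height' c l := by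
  simp [height', List.destutter'_cons, h]; omega

lemma height_le_height' (a : Var) (l : Word) : height l ≤ height' a l := by
  cases l with
  | nil => simp [height, height'_nil]
  | cons c l =>
    by_cases h : a = c
    · rw [height'_cons_eq l h, height_cons]
    · rw [height'_cons_ne l h, height_cons]; omega

lemma height'_le (a : Var) (l : Word) : height' a l ≤ height l + 1 := by
  cases l with
  | nil => simp [height, height'_nil]
  | cons c l =>
    by_cases h : a = c
    · rw [height'_cons_eq l h, height_cons]; omega
    · rw [height'_cons_ne l h, height_cons]; omega

lemma height_mono {s t : Word} (hst : List.Sublist s t) :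
    height s ≤ height t ∧ ∀ a, height' a s ≤ height' a t := by
  induction hst with
  | slnil => exact ⟨le_refl _, fun a => le_refl _⟩
  | cons a hst ih =>
    rename_i s t
    constructor
    · exact le_trans ih.1 (le_trans (height_le_height' a t) (height_cons a t).symm.le)
    · intro b
      by_cases h : b = a
      · rw [height'_cons_eq t h]
        exact le_trans (ih.2 b) (h ▸ le_refl _)
      · rw [height'_cons_ne t h]
        have h1 := height'_le b s
        have h2 := ih.1
        have h3 := height_le_height' a t
        omega
  | cons_cons a hst ih =>
    rename_i s t
    constructor
    · rw [height_cons, height_cons]; exact ih.2 a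
    · intro b
      by_cases h : b = a
      · rw [height'_cons_eq s h, height'_cons_eq t h]; exact ih.2 a
      · rw [height'_cons_ne s h, height'_cons_ne t h]
        exact Nat.add_le_add_left (ih.2 a) 1

lemma destutter'_map (σ : Var → Var) : ∀ (l : Word) (a : Var),
    (∀ c ∈ a :: l, ∀ d ∈ a :: l, σ c = σ d → c = d) →
    (l.map σ).destutter' (· ≠ ·) (σ a) = (l.destutter' (· ≠ ·) a).map σ
  | [], a, _ => rfl
  | b :: l, a, hinj => by
    by_cases h : a = b
    · subst h
      rw [List.map_cons, List.destutter'_cons_neg _ (by simp),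
        List.destutter'_cons_neg _ (by simp)]
      exact destutter'_map σ l a (fun c hc d hd => hinj c (by
        simp only [List.mem_cons] at hc ⊢; tauto) d (by
        simp only [List.mem_cons] at hd ⊢; tauto))
    · have hσ : σ a ≠ σ b := fun he => h (hinj a (by simp) b (by simp) he)
      rw [List.map_cons, List.destutter'_cons_pos _ hσ,
        List.destutter'_cons_pos _ h, List.map_cons]
      congr 1
      exact destutter'_map σ l b (fun c hc d hd => hinj c (by
        simp only [List.mem_cons] at hc ⊢; tauto) d (by
        simp only [List.mem_cons] at hd ⊢; tauto))

lemma height_map (σ : Var → Var) (l : Word)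
    (hinj : ∀ c ∈ l, ∀ d ∈ l, σ c = σ d → c = d) :
    height (l.map σ) = height l := by
  cases l with
  | nil => rfl
  | cons a l =>
    rw [List.map_cons, height_cons, height_cons, height', height',
      destutter'_map σ l a hinj, List.length_map]

lemma filter_flatMap (f : Var → Word) (p : Var → Bool) : ∀ u : Word,
    (u.flatMap f).filter p = u.flatMap fun z => (f z).filter p
  | [] => rfl
  | c :: u => by
    rw [List.flatMap_cons, List.flatMap_cons, List.filter_append,
      filter_flatMap f p u]

lemma flatMap_sublist (f g : Var → Word) : ∀ u : Word, (∀ z ∈ u, List.Sublist (f z) (g z)) →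
    List.Sublist (u.flatMap f) (u.flatMap g)
  | [], _ => List.Sublist.slnil
  | c :: u, hfg => by
    rw [List.flatMap_cons, List.flatMap_cons]
    exact (hfg c (by simp)).append (flatMap_sublist f g u fun z hz => hfg z (by simp [hz]))


lemma flatMap_pick (x y a b : Var) (hxy : x ≠ y) : ∀ u : Word,
    u.flatMap (fun z => if z = x then [a] else if z = y then [b] else []) =
      (u.filter (· ∈ [x, y])).map (fun z => if z = x then a else b)
  | [] => rfl
  | c :: u => by
    rw [List.flatMap_cons, flatMap_pick x y a b hxy u]
    by_cases hx : c = x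
    · simp [hx]
    · by_cases hy : c = y <;> simp [hx, hy, Ne.symm hxy]


/-- Lemma 4.3: if every two-variable deletion of `U` has height
at most 4, `Θ` sends distinct variables of `u` to powers of distinct
variables, and `Θ(u) = U`, then every two-variable deletion of `u` has
height at most 4. -/
theorem stmt17 (U : Word)
    (hU : ∀ x y : Var, x ∈ con U → y ∈ con U → x ≠ y → height (del U [x, y]) ≤ 4)
    (u : Word) (Θ : Var → Word) (hΘne : ∀ c : Var, Θ c ≠ [])
    (hΘ : ∀ x y : Var, x ∈ con u → y ∈ con u →
      ∀ c : Var, isPowerOf (Θ x) c → isPowerOf (Θ y) c → x = y)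
    (h : subst Θ u = U) :
    ∀ x y : Var, x ∈ con u → y ∈ con u → x ≠ y → height (del u [x, y]) ≤ 4 := by

  intro x y hx hy hxy
  have hx' : x ∈ u := hx
  have hy' : y ∈ u := hy
  by_cases hab : ∃ a ∈ Θ x, ∃ b ∈ Θ y, a ≠ b
  · obtain ⟨a, ha, b, hb, hab⟩ := hab
    have haU : a ∈ con U := by
      rw [← h]; exact List.mem_flatMap.mpr ⟨x, hx', ha⟩
    have hbU : b ∈ con U := by
      rw [← h]; exact List.mem_flatMap.mpr ⟨y, hy', hb⟩
    have key := hU a b haU hbU hab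
    set σ : Var → Var := fun z => if z = x then a else b with hσ
    set g : Var → Word := fun z => if z = x then [a] else if z = y then [b] else []
      with hg
    -- height of deletion equals height of its σ-image
    have hinj : ∀ c ∈ del u [x, y], ∀ d ∈ del u [x, y], σ c = σ d → c = d := by
      intro c hc d hd hcd
      have hc' : c = x ∨ c = y := by
        have := List.of_mem_filter hc; simpa using this
      have hd' : d = x ∨ d = y := by
        have := List.of_mem_filter hd; simpa using this
      rcases hc' with rfl | rfl <;> rcases hd' with rfl | rfl
      · rfl
      · simp only [hσ, if_pos rfl, if_neg (Ne.symm hxy)] at hcd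
        exact absurd hcd hab
      · simp only [hσ, if_pos rfl, if_neg (Ne.symm hxy)] at hcd
        exact absurd hcd.symm hab
      · rfl
    have h1 : height (del u [x, y]) = height ((del u [x, y]).map σ) :=
      (height_map σ _ hinj).symm
    have h2 : (del u [x, y]).map σ = u.flatMap g :=
      (flatMap_pick x y a b hxy u).symm
    have h3 : List.Sublist (u.flatMap g)
        (u.flatMap fun z => (Θ z).filter (· ∈ [a, b])) := by
      apply flatMap_sublist
      intro z hz
      by_cases hzx : z = x
      · subst hzx
        simp only [hg, if_pos rfl]
        exact List.singleton_sublist.mpr (List.mem_filter.mpr ⟨ha, by simp⟩)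
      · by_cases hzy : z = y
        · subst hzy
          simp only [hg, if_neg hzx, if_pos rfl]
          exact List.singleton_sublist.mpr (List.mem_filter.mpr ⟨hb, by simp⟩)
        · simp only [hg, if_neg hzx, if_neg hzy]
          exact List.nil_sublist _
    have h4 : (u.flatMap fun z => (Θ z).filter (· ∈ [a, b])) = del U [a, b] := by
      rw [← h]
      exact (filter_flatMap Θ _ u).symm
    rw [h1, h2]
    exact le_trans (height_mono (h4 ▸ h3)).1 key
  · exfalso
    push_neg at hab
    obtain ⟨c, hc⟩ := List.exists_mem_of_ne_nil _ (hΘne y)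
    obtain ⟨e, he⟩ := List.exists_mem_of_ne_nil _ (hΘne x)
    have hxpow : isPowerOf (Θ x) c := by
      refine ⟨(Θ x).length, List.length_pos_iff.mpr (hΘne x), ?_⟩
      exact List.eq_replicate_length.mpr fun d hd => hab d hd c hc
    have hypow : isPowerOf (Θ y) c := by
      refine ⟨(Θ y).length, List.length_pos_iff.mpr (hΘne y), ?_⟩
      refine List.eq_replicate_length.mpr fun d hd => ?_
      have h1 := hab e he d hd
      have h2 := hab e he c hc
      exact h1 ▸ h2
    exact hxy (hΘ x y hx hy c hxpow hypow)
end

section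
/- Let u and v be two words of the same type such that lin(u) = lin(v) and non(u) = non(v). Let Θ: 𝔄 → 𝔄⁺ be a substitution with the property that whenever Θ(x) contains more than one distinct variable, x is linear in u. Then Θ(u) and Θ(v) are of the same type. -/
/-- Unfolding lemma for `destutter'` with the relation `(· ≠ ·)`. -/
lemma d'c (x b : Var) (l : Word) :
    List.destutter' (· ≠ ·) x (b :: l)
      = if x ≠ b then x :: List.destutter' (· ≠ ·) b l
        else List.destutter' (· ≠ ·) x l := rfl

/-- Collapsing one adjacent duplicate does not change `destutter'`. -/
lemma d'_core (x c : Var) (Y : Word) :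
    List.destutter' (· ≠ ·) x (c :: c :: Y) = List.destutter' (· ≠ ·) x (c :: Y) := by
  by_cases h : x = c
  · subst h
    simp [d'c]
  · simp [d'c, h]

lemma d'_dup (c : Var) (Y : Word) : ∀ (X : Word) (x : Var),
    List.destutter' (· ≠ ·) x (X ++ c :: c :: Y) = List.destutter' (· ≠ ·) x (X ++ c :: Y)
  | [], x => d'_core x c Y
  | b :: X, x => by
    rw [List.cons_append, List.cons_append, d'c, d'c]
    split_ifs with h
    · rw [d'_dup c Y X b]
    · rw [d'_dup c Y X x]

lemma d_dup (c : Var) (X Y : Word) :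
    List.destutter (· ≠ ·) (X ++ c :: c :: Y) = List.destutter (· ≠ ·) (X ++ c :: Y) := by
  cases X with
  | nil =>
      show List.destutter' (· ≠ ·) c (c :: Y) = List.destutter' (· ≠ ·) c Y
      rw [d'c]
      simp
  | cons b X =>
      show List.destutter' (· ≠ ·) b (X ++ c :: c :: Y)
        = List.destutter' (· ≠ ·) b (X ++ c :: Y)
      exact d'_dup c Y X b

/-- A nonempty run can be shrunk to a single letter without changing destutter. -/
lemma d_rep (c : Var) (X Y : Word) : ∀ m : ℕ,
    List.destutter (· ≠ ·) (X ++ List.replicate (m + 1) c ++ Y)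
      = List.destutter (· ≠ ·) (X ++ [c] ++ Y)
  | 0 => rfl
  | m + 1 => by
    have h1 : X ++ List.replicate (m + 2) c ++ Y = X ++ c :: c :: (List.replicate m c ++ Y) := by
      simp [List.replicate_succ, List.append_assoc]
    have h2 : X ++ c :: (List.replicate m c ++ Y) = X ++ List.replicate (m + 1) c ++ Y := by
      simp [List.replicate_succ, List.append_assoc]
    rw [h1, d_dup, h2, d_rep c X Y m]

/-- `destutter'` only depends on the destuttering of its list argument. -/
lemma d'_destutter' : ∀ (t : Word) (b x : Var),
    List.destutter' (· ≠ ·) x (List.destutter' (· ≠ ·) b t)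
      = List.destutter' (· ≠ ·) x (b :: t)
  | [], b, x => rfl
  | c :: t, b, x => by
    rw [d'c b c t]
    split_ifs with h
    · rw [d'c x b (List.destutter' (· ≠ ·) c t), d'c x b (c :: t)]
      split_ifs with h2
      · rw [d'_destutter' t c b]
      · rw [d'_destutter' t c x]
    · have hbc : b = c := not_not.mp h
      subst hbc
      rw [d'_destutter' t b x, d'c x b (b :: t), d'c x b t]
      split_ifs with h2
      · congr 1
        rw [d'c b b t]
        simp
      · rfl

/-- Replace a suffix by its destuttering, under a pending element and a prefix. -/
lemma d'_canon (Y : Word) : ∀ (X : Word) (x : Var),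
    List.destutter' (· ≠ ·) x (X ++ List.destutter (· ≠ ·) Y)
      = List.destutter' (· ≠ ·) x (X ++ Y)
  | [], x => by
    cases Y with
    | nil => rfl
    | cons b t => exact d'_destutter' t b x
  | b :: X, x => by
    rw [List.cons_append, List.cons_append, d'c, d'c]
    split_ifs with h
    · rw [d'_canon Y X b]
    · rw [d'_canon Y X x]

lemma subst_cons (Θ : Var → Word) (a : Var) (t : Word) :
    subst Θ (a :: t) = Θ a ++ subst Θ t := by
  simp [subst]

/-- Key lemma: if every variable occurring at least twice in `w` is sent to a
power of a single letter, then `canon (subst Θ w)` only depends on `canon w`. -/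
lemma key (Θ : Var → Word) (hΘne : ∀ c : Var, Θ c ≠ []) : ∀ (n : ℕ) (w : Word),
    w.length ≤ n →
    (∀ a : Var, 2 ≤ w.count a → ∃ c k, Θ a = List.replicate (k + 1) c) →
    List.destutter (· ≠ ·) (subst Θ w)
      = List.destutter (· ≠ ·) (subst Θ (List.destutter (· ≠ ·) w)) := by
  intro n
  induction n with
  | zero =>
    intro w hw _
    rw [List.length_eq_zero_iff.mp (Nat.le_zero.mp hw)]
    rfl
  | succ n ih =>
    intro w hw hpow
    match w with
    | [] => rfl
    | [a] => rfl
    | a :: b :: t =>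
      by_cases hab : a = b
      · subst hab
        -- duplicate head: use that Θ a is a power
        obtain ⟨c, k, hc⟩ := hpow a (by simp [List.count_cons])
        have hcnt : ∀ x : Var, 2 ≤ (a :: t).count x → ∃ c k, Θ x = List.replicate (k + 1) c := by
          intro x hx
          exact hpow x (le_trans hx (List.Sublist.count_le x (by simp)))
        have hlen : (a :: t).length ≤ n := by simpa using hw
        have hd : List.destutter (· ≠ ·) (a :: a :: t) = List.destutter (· ≠ ·) (a :: t) := by
          simpa using d_dup a [] t
        rw [hd, subst_cons, subst_cons, hc, ← ih (a :: t) hlen hcnt, subst_cons, hc]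
        have h1 : List.replicate (k + 1) c ++ (List.replicate (k + 1) c ++ subst Θ t)
            = [] ++ List.replicate ((k + k + 1) + 1) c ++ subst Θ t := by
          rw [← List.append_assoc, ← List.replicate_add, List.nil_append]
          have : k + 1 + (k + 1) = k + k + 1 + 1 := by ring
          rw [this]
        have h2 : List.replicate (k + 1) c ++ subst Θ t
            = [] ++ List.replicate (k + 1) c ++ subst Θ t := by simp
        rw [h1, h2, d_rep, d_rep]
      · -- distinct heads
        have hd : List.destutter (· ≠ ·) (a :: b :: t)
            = a :: List.destutter (· ≠ ·) (b :: t) := by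
          show List.destutter' (· ≠ ·) a (b :: t) = a :: List.destutter' (· ≠ ·) b t
          rw [d'c, if_pos hab]
        have hcnt : ∀ x : Var, 2 ≤ (b :: t).count x → ∃ c k, Θ x = List.replicate (k + 1) c := by
          intro x hx
          exact hpow x (le_trans hx (List.Sublist.count_le x (by simp)))
        have hlen : (b :: t).length ≤ n := by simpa using hw
        obtain ⟨y, Y, hY⟩ := List.exists_cons_of_ne_nil (hΘne a)
        rw [hd, subst_cons Θ a (b :: t),
          subst_cons Θ a (List.destutter (· ≠ ·) (b :: t)), hY]
        show List.destutter' (· ≠ ·) y (Y ++ subst Θ (b :: t))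
          = List.destutter' (· ≠ ·) y (Y ++ subst Θ (List.destutter (· ≠ ·) (b :: t)))
        rw [← d'_canon (subst Θ (b :: t)) Y y,
          ← d'_canon (subst Θ (List.destutter (· ≠ ·) (b :: t))) Y y,
          ih (b :: t) hlen hcnt]

/-- Lemma 4.1: if `u` and `v` are of the same type with the
same linear and non-linear variables, and `Θ` maps every non-linear variable
of `u` to a power of a single variable, then `Θ(u)` and `Θ(v)` are of the
same type. -/
theorem stmt19 (u v : Word) (hu : u ≠ []) (hv : v ≠ [])
    (hst : sameType u v)
    (hlin : lin u = lin v) (hnon : nonlin u = nonlin v)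
    (Θ : Var → Word) (hΘne : ∀ c : Var, Θ c ≠ [])
    (hΘ : ∀ x : Var, 2 ≤ (Θ x).toFinset.card → x ∈ lin u) :
    sameType (subst Θ u) (subst Θ v) := by
  have pow : ∀ a : Var, a ∉ lin u → ∃ c k, Θ a = List.replicate (k + 1) c := by
    intro a ha
    have hcard : (Θ a).toFinset.card ≤ 1 := by
      by_contra h
      exact ha (hΘ a (by omega))
    obtain ⟨y, Y, hY⟩ := List.exists_cons_of_ne_nil (hΘne a)
    have hne : (Θ a).toFinset.Nonempty := ⟨y, by simp [hY]⟩
    have hone : (Θ a).toFinset.card = 1 :=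
      le_antisymm hcard (Finset.one_le_card.mpr hne)
    obtain ⟨c, hc⟩ := Finset.card_eq_one.mp hone
    refine ⟨c, (Θ a).length - 1, ?_⟩
    have hall : ∀ x ∈ Θ a, x = c := by
      intro x hx
      exact Finset.mem_singleton.mp (hc ▸ List.mem_toFinset.mpr hx)
    have hlen : (Θ a).length - 1 + 1 = (Θ a).length :=
      Nat.succ_pred_eq_of_pos (List.length_pos_iff.mpr (hΘne a))
    rw [hlen]
    exact List.eq_replicate_of_mem hall
  have hu' : ∀ a : Var, 2 ≤ u.count a → ∃ c k, Θ a = List.replicate (k + 1) c := by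
    intro a h
    refine pow a ?_
    simp only [lin, Set.mem_setOf_eq]
    omega
  have hv' : ∀ a : Var, 2 ≤ v.count a → ∃ c k, Θ a = List.replicate (k + 1) c := by
    intro a h
    have : a ∈ nonlin u := by
      rw [hnon]
      exact h
    refine pow a ?_
    simp only [lin, Set.mem_setOf_eq]
    simp only [nonlin, Set.mem_setOf_eq] at this
    omega
  show List.destutter (· ≠ ·) (subst Θ u) = List.destutter (· ≠ ·) (subst Θ v)
  rw [key Θ hΘne u.length u le_rfl hu', key Θ hΘne v.length v le_rfl hv']
  rw [show List.destutter (· ≠ ·) u = List.destutter (· ≠ ·) v from hst]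
end
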